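/- Let X = ℝⁿ or X = [0,∞)ⁿ, and let γ_p : ℝⁿ → ℝ be a scoring function such that the strict epistemic pooling principle holds for Hadamard (componentwise product) pooling for all e, f ∈ X, i.e., γ_p(e ⊙ f) > 0 ↔ (γ_p(e) > 0 ∨ γ_p(f) > 0), where (e ⊙ f)_i = e_i · f_i. Let e = (e_1,...,e_n) ∈ X satisfy γ_p(e) > 0, and let I = {i : e_i = 0}. Then every f ∈ X with f_i = 0 for all i ∈ I satisfies γ_p(f) > 0. -/

import Mathlib

/-- For Hadamard pooling with X = ℝⁿ or X = [0,∞)ⁿ, under the strict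
epistemic pooling principle, if γ_p(e) > 0 and I = {i : e i = 0}, then every f ∈ X
vanishing on all coordinates of I satisfies γ_p(f) > 0. -/
theorem had_pooling_zero_pattern (n : ℕ) (X : Set (Fin n → ℝ))
    (hX : X = Set.univ ∨ X = {x : Fin n → ℝ | ∀ i, 0 ≤ x i})
    (γ : (Fin n → ℝ) → ℝ)
    (hpool : ∀ e ∈ X, ∀ f ∈ X,
      γ (fun i => e i * f i) > 0 ↔ (γ e > 0 ∨ γ f > 0)) :
    ∀ e ∈ X, γ e > 0 →
      ∀ f ∈ X, (∀ i, e i = 0 → f i = 0) → γ f > 0 := by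
  intro e he hγe f hf hvan
  set g : Fin n → ℝ := fun i => f i / e i with hg
  have hgX : g ∈ X := by
    rcases hX with h | h
    · simp [h]
    · rw [h] at he hf ⊢
      intro i
      exact div_nonneg (hf i) (he i)
  have heg : (fun i => e i * g i) = f := by
    funext i
    by_cases h : e i = 0
    · simp [hg, h, hvan i h]
    · show e i * (f i / e i) = f i
      field_simp [h]
  have := (hpool e he g hgX).2 (Or.inl hγe)
  rwa [heg] at this
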